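/- Let T > 0, α ∈ (1/2, 1), n ∈ ℕ, and suppose a continuous function y : [0,T] → [0,∞) satisfies y(τ) ≤ c + (μ/Γ(α)) ∫_0^τ (τ - ξ)^{2α - 2} y(ξ) dξ for all τ ∈ [0,T], where c, μ ≥ 0 are constants. Then y(τ) ≤ c · E_{2α-1}(μ' τ^{2α-1}) for all τ ∈ [0,T], where E_{2α-1} is the Mittag-Leffler function with parameter 2α - 1 and μ' = μ Γ(2α-1)/Γ(α). -/

import Mathlib

set_option maxHeartbeats 1000000

open MeasureTheory Set Filter

section GronwallAux

lemma realBeta {p q : ℝ} (hp : 0 < p) (hq : 0 < q) :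
    ∫ x in (0:ℝ)..1, x ^ (p - 1) * (1 - x) ^ (q - 1) =
      Real.Gamma p * Real.Gamma q / Real.Gamma (p + q) := by
  have hpq : 0 < Real.Gamma (p + q) := Real.Gamma_pos_of_pos (by linarith)
  have h2 := Complex.Gamma_mul_Gamma_eq_betaIntegral
      (s := (p : ℂ)) (t := (q : ℂ)) (by simpa using hp) (by simpa using hq)
  have h1 : Complex.betaIntegral p q =
      ((∫ x in (0:ℝ)..1, x ^ (p - 1) * (1 - x) ^ (q - 1) : ℝ) : ℂ) := by
    rw [Complex.betaIntegral, ← intervalIntegral.integral_ofReal]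
    apply intervalIntegral.integral_congr
    intro x hx
    rw [Set.uIcc_of_le (by norm_num : (0:ℝ) ≤ 1)] at hx
    simp only [Complex.ofReal_mul, Complex.ofReal_cpow hx.1,
      Complex.ofReal_cpow (by linarith [hx.2] : (0:ℝ) ≤ 1 - x)]
    push_cast
    ring
  rw [h1, ← Complex.ofReal_add, Complex.Gamma_ofReal, Complex.Gamma_ofReal,
    Complex.Gamma_ofReal, ← Complex.ofReal_mul, ← Complex.ofReal_mul] at h2
  have := Complex.ofReal_inj.mp h2
  field_simp
  linarith [this]

lemma kernel_integral {β γ τ : ℝ} (hβ : 0 < β) (hγ : 0 ≤ γ) (hτ : 0 ≤ τ) :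
    ∫ ξ in (0:ℝ)..τ, (τ - ξ) ^ (β - 1) * ξ ^ γ
      = Real.Gamma β * Real.Gamma (γ + 1) / Real.Gamma (β + γ + 1) * τ ^ (β + γ) := by
  rcases hτ.eq_or_lt with h0 | h0
  · rw [← h0, intervalIntegral.integral_same, Real.zero_rpow (by linarith), mul_zero]
  · have hτ' : τ ≠ 0 := ne_of_gt h0
    have key := intervalIntegral.integral_comp_mul_left
      (fun ξ => (τ - ξ) ^ (β - 1) * ξ ^ γ) (c := τ) hτ' (a := 0) (b := 1)
    rw [mul_zero, mul_one] at key
    have congr1 : ∫ x in (0:ℝ)..1, (τ - τ * x) ^ (β - 1) * (τ * x) ^ γ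
        = τ ^ (β - 1) * τ ^ γ * (Real.Gamma (γ + 1) * Real.Gamma β / Real.Gamma (γ + 1 + β)) := by
      rw [show (Real.Gamma (γ+1) * Real.Gamma β / Real.Gamma (γ+1+β))
          = ∫ x in (0:ℝ)..1, x ^ ((γ+1) - 1) * (1 - x) ^ (β - 1) from
        (realBeta (by linarith) hβ).symm, ← intervalIntegral.integral_const_mul]
      apply intervalIntegral.integral_congr
      intro x hx
      dsimp only
      rw [Set.uIcc_of_le (by norm_num : (0:ℝ) ≤ 1)] at hx
      have h1x : 0 ≤ 1 - x := by linarith [hx.2]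
      have : τ - τ * x = τ * (1 - x) := by ring
      rw [this, Real.mul_rpow h0.le h1x, Real.mul_rpow h0.le hx.1]
      have : (γ + 1) - 1 = γ := by ring
      rw [this]
      ring
    rw [congr1] at key
    have hτpow : τ * (τ ^ (β - 1) * τ ^ γ) = τ ^ (β + γ) := by
      rw [← Real.rpow_add h0]
      nth_rewrite 1 [← Real.rpow_one τ]
      rw [← Real.rpow_add h0]
      ring_nf
    calc ∫ ξ in (0:ℝ)..τ, (τ - ξ) ^ (β - 1) * ξ ^ γ
        = τ * (τ ^ (β - 1) * τ ^ γ * (Real.Gamma (γ + 1) * Real.Gamma β / Real.Gamma (γ + 1 + β))) := by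
          conv_rhs => rw [key]
          rw [smul_eq_mul, ← mul_assoc, mul_inv_cancel₀ hτ', one_mul]
      _ = Real.Gamma β * Real.Gamma (γ + 1) / Real.Gamma (β + γ + 1) * τ ^ (β + γ) := by
          rw [show γ + 1 + β = β + γ + 1 by ring, ← mul_assoc, hτpow]; ring

lemma kernel_integrable {β τ : ℝ} (hβ : 0 < β) (hτ : 0 ≤ τ) :
    IntervalIntegrable (fun ξ => (τ - ξ) ^ (β - 1)) volume 0 τ := by
  have h := (intervalIntegral.intervalIntegrable_rpow' (a := 0) (b := τ) (r := β - 1)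
    (by linarith)).comp_sub_left τ
  simpa using h.symm

lemma kernel_mul_integrable {β τ : ℝ} (hβ : 0 < β) (hτ : 0 ≤ τ)
    {h : ℝ → ℝ} (hm : AEStronglyMeasurable h (volume.restrict (Set.Ioc 0 τ)))
    {C : ℝ} (hC : ∀ ξ ∈ Set.Ioc (0:ℝ) τ, |h ξ| ≤ C) :
    IntervalIntegrable (fun ξ => (τ - ξ) ^ (β - 1) * h ξ) volume 0 τ := by
  have hK := kernel_integrable hβ hτ
  have hKC : IntervalIntegrable (fun ξ => C * (τ - ξ) ^ (β - 1)) volume 0 τ :=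
    hK.const_mul C
  apply hKC.mono_fun
  · have hKm : AEStronglyMeasurable (fun ξ => (τ - ξ) ^ (β - 1))
        (volume.restrict (Set.uIoc 0 τ)) := by
      rw [Set.uIoc_of_le hτ]; exact hK.1.aestronglyMeasurable
    exact hKm.mul (by rwa [Set.uIoc_of_le hτ])
  · rw [Set.uIoc_of_le hτ, Filter.EventuallyLE, ae_restrict_iff' measurableSet_Ioc]
    filter_upwards with ξ hξ
    have hKnn : 0 ≤ (τ - ξ) ^ (β - 1) := Real.rpow_nonneg (by linarith [hξ.2]) _
    have : |(τ - ξ) ^ (β - 1) * h ξ| = (τ - ξ) ^ (β - 1) * |h ξ| := by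
      rw [abs_mul, abs_of_nonneg hKnn]
    rw [Real.norm_eq_abs, Real.norm_eq_abs, this]
    calc (τ - ξ) ^ (β - 1) * |h ξ| ≤ (τ - ξ) ^ (β - 1) * C :=
          mul_le_mul_of_nonneg_left (hC ξ hξ) hKnn
      _ ≤ |C * (τ - ξ) ^ (β - 1)| := by rw [mul_comm]; exact le_abs_self _

lemma ml_tendsto {β x : ℝ} (hβ : 0 < β) (hx : 0 ≤ x) :
    Tendsto (fun j : ℕ => x ^ j / Real.Gamma (β * j + 1)) atTop (nhds 0) := by
  set a : ℝ := max 1 x with ha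
  have ha1 : 1 ≤ a := le_max_left _ _
  set B : ℕ := ⌈1 / β⌉₊ with hB
  have hBβ : 1 / β ≤ B := Nat.le_ceil _
  set w : ℝ := a ^ B with hw
  have hw1 : 1 ≤ w := one_le_pow₀ ha1
  have hβj : Tendsto (fun j : ℕ => β * j) atTop atTop :=
    Tendsto.const_mul_atTop hβ tendsto_natCast_atTop_atTop
  have hfloor : Tendsto (fun j : ℕ => ⌊β * j⌋₊ - 1) atTop atTop :=
    (tendsto_sub_atTop_nat 1).comp (tendsto_nat_floor_atTop.comp hβj)
  have hF : Tendsto (fun k : ℕ => w ^ 2 * (w ^ k / k.factorial)) atTop (nhds 0) := by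
    simpa using (FloorSemiring.tendsto_pow_div_factorial_atTop w).const_mul (w ^ 2)
  have hG := hF.comp hfloor
  apply squeeze_zero' (g := fun j : ℕ => w ^ 2 * (w ^ (⌊β * j⌋₊ - 1) / (⌊β * j⌋₊ - 1).factorial))
  · filter_upwards with j
    have h1 : 0 < Real.Gamma (β * j + 1) :=
      Real.Gamma_pos_of_pos (by positivity)
    positivity
  · filter_upwards [hβj.eventually_ge_atTop 3] with j hj
    set m : ℕ := ⌊β * j⌋₊ with hm
    have hm3 : 3 ≤ m := Nat.le_floor (by exact_mod_cast hj)
    have hmle : (m : ℝ) ≤ β * j := Nat.floor_le (by linarith)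
    have hmgt : β * j < m + 1 := Nat.lt_floor_add_one _
    have hgam : ((m - 1).factorial : ℝ) ≤ Real.Gamma (β * j + 1) := by
      have h1 : Real.Gamma ((m:ℝ)) ≤ Real.Gamma (β * j + 1) := by
        apply Real.Gamma_strictMonoOn_Ici.monotoneOn
        · exact mem_Ici.2 (by exact_mod_cast le_trans (by norm_num) hm3)
        · exact mem_Ici.2 (by linarith)
        · linarith
      have h2 : Real.Gamma ((m:ℝ)) = (m - 1).factorial := by
        have hcast : ((m - 1 : ℕ) : ℝ) + 1 = (m : ℝ) := by
          have h1m : 1 ≤ m := by omega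
          push_cast [Nat.cast_sub h1m]
          ring
        rw [← hcast, Real.Gamma_nat_eq_factorial]
      linarith
    have hnum : x ^ j ≤ w ^ (m + 1) := by
      have hxa : x ^ j ≤ a ^ j := pow_le_pow_left₀ hx (le_max_right _ _) j
      have hjle : j ≤ (m + 1) * B := by
        have h3 : (j : ℝ) ≤ ((m : ℝ) + 1) * B := by
          have h1 : (j:ℝ) = (β * j) * (1/β) := by field_simp
          calc (j:ℝ) = (β * j) * (1/β) := h1
            _ ≤ ((m:ℝ)+1) * (1/β) := by
                apply mul_le_mul_of_nonneg_right (le_of_lt hmgt)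
                positivity
            _ ≤ ((m:ℝ)+1) * B := by
                apply mul_le_mul_of_nonneg_left hBβ
                positivity
        exact_mod_cast (by push_cast; exact_mod_cast h3 : (j:ℝ) ≤ (((m+1)*B : ℕ) : ℝ))
      calc x ^ j ≤ a ^ j := hxa
        _ ≤ a ^ ((m + 1) * B) := pow_le_pow_right₀ ha1 hjle
        _ = w ^ (m + 1) := by rw [hw, ← pow_mul, Nat.mul_comm]
    have hsplit : w ^ (m + 1) = w ^ 2 * w ^ (m - 1) := by
      rw [← pow_add]
      congr 1
      omega
    have hfacpos : (0:ℝ) < (m - 1).factorial := by exact_mod_cast (m-1).factorial_pos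
    calc x ^ j / Real.Gamma (β * j + 1)
        ≤ w ^ (m + 1) / ((m - 1).factorial : ℝ) :=
          div_le_div₀ (by positivity) hnum hfacpos hgam
      _ = w ^ 2 * (w ^ (m - 1) / ((m - 1).factorial : ℝ)) := by
          rw [hsplit]; ring
  · exact hG

lemma ml_summable {β z : ℝ} (hβ : 0 < β) (hz : 0 ≤ z) :
    Summable (fun j : ℕ => z ^ j / Real.Gamma (β * j + 1)) := by
  have h2 := ml_tendsto hβ (by linarith : (0:ℝ) ≤ 2 * z)
  have hev := h2.eventually_lt_const (by norm_num : (0:ℝ) < 1)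
  obtain ⟨J, hJ⟩ := eventually_atTop.1 hev
  rw [← summable_nat_add_iff J]
  have hgeo : Summable (fun j : ℕ => ((1:ℝ)/2) ^ j) :=
    summable_geometric_of_lt_one (by norm_num) (by norm_num)
  apply Summable.of_nonneg_of_le _ _ hgeo
  · intro j
    have : 0 < Real.Gamma (β * (j + J) + 1) := Real.Gamma_pos_of_pos (by positivity)
    positivity
  · intro j
    set nn := j + J with hnn
    have hΓ : 0 < Real.Gamma (β * nn + 1) := Real.Gamma_pos_of_pos (by positivity)
    have key : z ^ nn / Real.Gamma (β * nn + 1)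
        = ((2 * z) ^ nn / Real.Gamma (β * nn + 1)) * (1/2) ^ nn := by
      rw [mul_pow]
      field_simp
      rw [mul_assoc, ← mul_pow]; norm_num
    rw [key]
    calc ((2 * z) ^ nn / Real.Gamma (β * nn + 1)) * (1/2) ^ nn
        ≤ 1 * (1/2) ^ nn := by
          apply mul_le_mul_of_nonneg_right (le_of_lt (hJ nn (by omega))) (by positivity)
      _ = (1/2) ^ nn := one_mul _
      _ ≤ (1/2) ^ j := by
          apply pow_le_pow_of_le_one (by norm_num) (by norm_num)
          omega

end GronwallAux

/-- Fractional Gronwall inequality with singular kernel `(τ-ξ)^{2α-2}`: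
`y(τ) ≤ c E_{2α-1}(μ' τ^{2α-1})` with `μ' = μ Γ(2α-1)/Γ(α)`, where
`E_β(z) = ∑_{j≥0} z^j / Γ(βj+1)` is the Mittag-Leffler function. -/
theorem stmt10 (T α : ℝ) (hT : 0 < T) (hα : α ∈ Set.Ioo (1/2 : ℝ) 1) (n : ℕ)
    (y : ℝ → ℝ) (hycont : ContinuousOn y (Set.Icc 0 T))
    (hynonneg : ∀ τ ∈ Set.Icc (0:ℝ) T, 0 ≤ y τ)
    (c μ : ℝ) (hc : 0 ≤ c) (hμ : 0 ≤ μ)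
    (hy : ∀ τ ∈ Set.Icc (0:ℝ) T,
      y τ ≤ c + (μ / Real.Gamma α) * ∫ ξ in (0:ℝ)..τ, ((τ - ξ) ^ (2 * α - 2)) * y ξ) :
    ∀ τ ∈ Set.Icc (0:ℝ) T,
      y τ ≤ c * ∑' j : ℕ,
        ((μ * Real.Gamma (2 * α - 1) / Real.Gamma α) * τ ^ (2 * α - 1)) ^ j /
          Real.Gamma ((2 * α - 1) * j + 1) := by
  obtain ⟨hα1, hα2⟩ := hα
  set β : ℝ := 2 * α - 1 with hβdef
  have hβ0 : 0 < β := by rw [hβdef]; linarith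
  have hβ1 : β < 1 := by rw [hβdef]; linarith
  rw [show 2 * α - 2 = β - 1 by rw [hβdef]; ring] at hy
  have hΓα : 0 < Real.Gamma α := Real.Gamma_pos_of_pos (by linarith)
  have hΓβ : 0 < Real.Gamma β := Real.Gamma_pos_of_pos hβ0
  set k : ℝ := μ / Real.Gamma α with hkdef
  have hk0 : 0 ≤ k := div_nonneg hμ hΓα.le
  set ν : ℝ := k * Real.Gamma β with hνdef
  have hν0 : 0 ≤ ν := mul_nonneg hk0 hΓβ.le
  obtain ⟨C, hC⟩ := isCompact_Icc.exists_bound_of_continuousOn hycont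
  set M : ℝ := max C 0 with hMdef
  have hM0 : 0 ≤ M := le_max_right _ _
  have hyM : ∀ τ ∈ Set.Icc (0:ℝ) T, |y τ| ≤ M := fun τ hτ =>
    le_trans (by simpa [Real.norm_eq_abs] using hC τ hτ) (le_max_left _ _)
  -- key integral identity
  have key : ∀ (j : ℕ) (τ : ℝ), 0 ≤ τ →
      ∫ ξ in (0:ℝ)..τ, (τ - ξ) ^ (β - 1) * (ξ ^ (β * j) / Real.Gamma (β * j + 1))
        = Real.Gamma β * (τ ^ (β * (j + 1 : ℕ)) / Real.Gamma (β * (j + 1 : ℕ) + 1)) := by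
    intro j τ hτ
    have hΓj : 0 < Real.Gamma (β * j + 1) := Real.Gamma_pos_of_pos (by positivity)
    have hΓj1 : 0 < Real.Gamma (β * (j + 1 : ℕ) + 1) := Real.Gamma_pos_of_pos (by positivity)
    have h := kernel_integral (γ := β * j) (τ := τ) hβ0 (by positivity) hτ
    have e1 : β + β * (j:ℝ) = β * ((j:ℕ) + 1 : ℕ) := by push_cast; ring
    calc ∫ ξ in (0:ℝ)..τ, (τ - ξ) ^ (β - 1) * (ξ ^ (β * j) / Real.Gamma (β * j + 1))
        = (∫ ξ in (0:ℝ)..τ, (τ - ξ) ^ (β - 1) * ξ ^ (β * j)) / Real.Gamma (β * j + 1) := by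
          rw [← intervalIntegral.integral_div]
          apply intervalIntegral.integral_congr
          intro ξ _
          dsimp only
          ring
      _ = Real.Gamma β * (τ ^ (β * (j + 1 : ℕ)) / Real.Gamma (β * (j + 1 : ℕ) + 1)) := by
          rw [h, ← e1]
          have hne1 : Real.Gamma (β * (j:ℝ) + 1) ≠ 0 := hΓj.ne'
          have hne2 : Real.Gamma (β + β * (j:ℝ) + 1) ≠ 0 := by
            rw [e1]; exact hΓj1.ne'
          field_simp
  -- main induction
  have ind : ∀ m : ℕ, ∀ τ ∈ Set.Icc (0:ℝ) T,
      y τ ≤ c * (∑ j ∈ Finset.range m, ν ^ j * (τ ^ (β * j) / Real.Gamma (β * j + 1)))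
        + M * (ν ^ m * (τ ^ (β * m) / Real.Gamma (β * m + 1))) := by
    intro m
    induction m with
    | zero =>
      intro τ hτ
      simpa [Real.Gamma_one] using (le_abs_self _).trans (hyM τ hτ)
    | succ m ih =>
      intro τ hτ
      obtain ⟨hτ0, hτT⟩ := hτ
      have hIocsub : Set.Ioc (0:ℝ) τ ⊆ Set.Icc (0:ℝ) T :=
        fun ξ hξ => ⟨hξ.1.le, hξ.2.trans hτT⟩
      have hIccsub : Set.Icc (0:ℝ) τ ⊆ Set.Icc (0:ℝ) T :=
        fun ξ hξ => ⟨hξ.1, hξ.2.trans hτT⟩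
      have hym : AEStronglyMeasurable y (volume.restrict (Set.Ioc 0 τ)) :=
        (hycont.mono hIocsub).aestronglyMeasurable measurableSet_Ioc
      have int1 : IntervalIntegrable (fun ξ => (τ - ξ) ^ (β - 1) * y ξ) volume 0 τ :=
        kernel_mul_integrable hβ0 hτ0 hym (fun ξ hξ => hyM ξ (hIocsub hξ))
      have hint : ∀ j : ℕ, IntervalIntegrable
          (fun ξ => (τ - ξ) ^ (β - 1) * (ξ ^ (β * j) / Real.Gamma (β * j + 1))) volume 0 τ := by
        intro j
        have hΓj : 0 < Real.Gamma (β * j + 1) := Real.Gamma_pos_of_pos (by positivity)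
        apply kernel_mul_integrable hβ0 hτ0
          (C := τ ^ (β * j) / Real.Gamma (β * j + 1))
        · exact ((intervalIntegral.intervalIntegrable_rpow' (a := 0) (b := τ) (r := β * j)
            (by nlinarith [mul_nonneg hβ0.le (Nat.cast_nonneg j)] : (-1:ℝ) < β * j)).1.aestronglyMeasurable).mul_const _
        · intro ξ hξ
          rw [abs_of_nonneg (div_nonneg (Real.rpow_nonneg hξ.1.le _) hΓj.le)]
          gcongr
          · exact hξ.1.le
          · exact hξ.2
      have intS : IntervalIntegrable (fun ξ =>
          ∑ j ∈ Finset.range m,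
            ν ^ j * ((τ - ξ) ^ (β - 1) * (ξ ^ (β * j) / Real.Gamma (β * j + 1))))
          volume 0 τ := by
        have h := IntervalIntegrable.sum (μ := volume) (a := (0:ℝ)) (b := τ) (Finset.range m)
          (f := fun j ξ => ν ^ j * ((τ - ξ) ^ (β - 1) * (ξ ^ (β * j) / Real.Gamma (β * j + 1))))
          (fun j _ => (hint j).const_mul (ν ^ j))
        have heq : (fun ξ => ∑ j ∈ Finset.range m,
            ν ^ j * ((τ - ξ) ^ (β - 1) * (ξ ^ (β * j) / Real.Gamma (β * j + 1))))
            = ∑ j ∈ Finset.range m,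
              (fun ξ => ν ^ j * ((τ - ξ) ^ (β - 1) * (ξ ^ (β * j) / Real.Gamma (β * j + 1)))) := by
          funext ξ
          rw [Finset.sum_apply]
        rw [heq]
        exact h
      have int2 : IntervalIntegrable (fun ξ =>
          c * ∑ j ∈ Finset.range m,
            ν ^ j * ((τ - ξ) ^ (β - 1) * (ξ ^ (β * j) / Real.Gamma (β * j + 1)))
          + M * ν ^ m * ((τ - ξ) ^ (β - 1) * (ξ ^ (β * m) / Real.Gamma (β * m + 1))))
          volume 0 τ :=
        (intS.const_mul c).add ((hint m).const_mul (M * ν ^ m))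
      have mono : (∫ ξ in (0:ℝ)..τ, (τ - ξ) ^ (β - 1) * y ξ)
          ≤ ∫ ξ in (0:ℝ)..τ, (c * ∑ j ∈ Finset.range m,
              ν ^ j * ((τ - ξ) ^ (β - 1) * (ξ ^ (β * j) / Real.Gamma (β * j + 1)))
            + M * ν ^ m * ((τ - ξ) ^ (β - 1) * (ξ ^ (β * m) / Real.Gamma (β * m + 1)))) := by
        apply intervalIntegral.integral_mono_on hτ0 int1 int2
        intro ξ hξ
        have hKnn : 0 ≤ (τ - ξ) ^ (β - 1) := Real.rpow_nonneg (by linarith [hξ.2]) _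
        have hyb := ih ξ (hIccsub hξ)
        calc (τ - ξ) ^ (β - 1) * y ξ
            ≤ (τ - ξ) ^ (β - 1) *
              (c * (∑ j ∈ Finset.range m, ν ^ j * (ξ ^ (β * j) / Real.Gamma (β * j + 1)))
                + M * (ν ^ m * (ξ ^ (β * m) / Real.Gamma (β * m + 1)))) :=
              mul_le_mul_of_nonneg_left hyb hKnn
          _ = _ := by
              simp only [mul_add, Finset.mul_sum]
              congr 1
              · apply Finset.sum_congr rfl
                intro j _
                ring
              · ring
      have hIR : (∫ ξ in (0:ℝ)..τ, (c * ∑ j ∈ Finset.range m,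
              ν ^ j * ((τ - ξ) ^ (β - 1) * (ξ ^ (β * j) / Real.Gamma (β * j + 1)))
            + M * ν ^ m * ((τ - ξ) ^ (β - 1) * (ξ ^ (β * m) / Real.Gamma (β * m + 1)))))
          = c * (∑ j ∈ Finset.range m,
              ν ^ j * (Real.Gamma β * (τ ^ (β * (j + 1 : ℕ)) / Real.Gamma (β * (j + 1 : ℕ) + 1))))
            + M * ν ^ m * (Real.Gamma β * (τ ^ (β * (m + 1 : ℕ)) / Real.Gamma (β * (m + 1 : ℕ) + 1))) := by
        have hFS : (∫ ξ in (0:ℝ)..τ, ∑ j ∈ Finset.range m,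
              ν ^ j * ((τ - ξ) ^ (β - 1) * (ξ ^ (β * j) / Real.Gamma (β * j + 1))))
            = ∑ j ∈ Finset.range m, ∫ ξ in (0:ℝ)..τ,
              ν ^ j * ((τ - ξ) ^ (β - 1) * (ξ ^ (β * j) / Real.Gamma (β * j + 1))) :=
          intervalIntegral.integral_finset_sum (ι := ℕ) (s := Finset.range m)
            (f := fun j ξ => ν ^ j * ((τ - ξ) ^ (β - 1) * (ξ ^ (β * j) / Real.Gamma (β * j + 1))))
            (fun j _ => (hint j).const_mul (ν ^ j))
        rw [intervalIntegral.integral_add (intS.const_mul c) ((hint m).const_mul (M * ν ^ m)),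
          intervalIntegral.integral_const_mul, intervalIntegral.integral_const_mul,
          hFS, key m τ hτ0]
        congr 1
        congr 1
        apply Finset.sum_congr rfl
        intro j _
        rw [intervalIntegral.integral_const_mul, key j τ hτ0]
      have step2 : k * (∫ ξ in (0:ℝ)..τ, (τ - ξ) ^ (β - 1) * y ξ)
          ≤ k * (c * (∑ j ∈ Finset.range m,
              ν ^ j * (Real.Gamma β * (τ ^ (β * (j + 1 : ℕ)) / Real.Gamma (β * (j + 1 : ℕ) + 1))))
            + M * ν ^ m * (Real.Gamma β * (τ ^ (β * (m + 1 : ℕ)) / Real.Gamma (β * (m + 1 : ℕ) + 1)))) :=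
        mul_le_mul_of_nonneg_left (mono.trans_eq hIR) hk0
      have hyτ := hy τ ⟨hτ0, hτT⟩
      have hterm : ∀ j : ℕ, k * (ν ^ j *
            (Real.Gamma β * (τ ^ (β * (j + 1 : ℕ)) / Real.Gamma (β * (j + 1 : ℕ) + 1))))
          = ν ^ (j + 1) * (τ ^ (β * (j + 1 : ℕ)) / Real.Gamma (β * (j + 1 : ℕ) + 1)) := by
        intro j
        rw [pow_succ, hνdef]
        ring
      have hsum2 : k * (∑ j ∈ Finset.range m,
            ν ^ j * (Real.Gamma β * (τ ^ (β * (j + 1 : ℕ)) / Real.Gamma (β * (j + 1 : ℕ) + 1))))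
          = ∑ j ∈ Finset.range m,
            ν ^ (j + 1) * (τ ^ (β * (j + 1 : ℕ)) / Real.Gamma (β * (j + 1 : ℕ) + 1)) := by
        rw [Finset.mul_sum]
        exact Finset.sum_congr rfl fun j _ => hterm j
      have htm := hterm m
      calc y τ ≤ c + k * ∫ ξ in (0:ℝ)..τ, (τ - ξ) ^ (β - 1) * y ξ := hyτ
        _ ≤ c + k * (c * (∑ j ∈ Finset.range m,
              ν ^ j * (Real.Gamma β * (τ ^ (β * (j + 1 : ℕ)) / Real.Gamma (β * (j + 1 : ℕ) + 1))))
            + M * ν ^ m * (Real.Gamma β * (τ ^ (β * (m + 1 : ℕ)) / Real.Gamma (β * (m + 1 : ℕ) + 1)))) :=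
          (add_le_add_iff_left c).mpr step2
        _ = _ := by
            rw [Finset.sum_range_succ']
            simp only [Nat.cast_zero, mul_zero, Real.rpow_zero, zero_add, Real.Gamma_one,
              pow_zero, one_mul, div_one]
            push_cast at hsum2 htm ⊢
            linear_combination c * hsum2 + M * htm
  -- conclusion
  intro τ hτ
  have hτ0 := hτ.1
  have hν' : μ * Real.Gamma β / Real.Gamma α = ν := by rw [hνdef, hkdef]; ring
  simp only [hν']
  have hz0 : 0 ≤ ν * τ ^ β := mul_nonneg hν0 (Real.rpow_nonneg hτ0 _)
  have hsummable := ml_summable hβ0 hz0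
  have hterm_eq : ∀ j : ℕ, ν ^ j * (τ ^ (β * j) / Real.Gamma (β * j + 1))
      = (ν * τ ^ β) ^ j / Real.Gamma (β * j + 1) := by
    intro j
    have hpow : (ν * τ ^ β) ^ j = ν ^ j * τ ^ (β * j) := by
      rw [mul_pow, ← Real.rpow_natCast (τ ^ β) j, ← Real.rpow_mul hτ0]
    rw [hpow]
    ring
  have htends : Tendsto (fun m : ℕ =>
        c * (∑' j : ℕ, (ν * τ ^ β) ^ j / Real.Gamma (β * j + 1))
        + M * ((ν * τ ^ β) ^ m / Real.Gamma (β * m + 1))) atTop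
      (nhds (c * ∑' j : ℕ, (ν * τ ^ β) ^ j / Real.Gamma (β * j + 1))) := by
    have h1 := (ml_tendsto hβ0 hz0).const_mul M
    simpa using tendsto_const_nhds.add h1
  apply ge_of_tendsto' htends
  intro m
  have h1 := ind m τ hτ
  have h2 : (∑ j ∈ Finset.range m, ν ^ j * (τ ^ (β * j) / Real.Gamma (β * j + 1)))
      ≤ ∑' j : ℕ, (ν * τ ^ β) ^ j / Real.Gamma (β * j + 1) := by
    rw [Finset.sum_congr rfl (fun j _ => hterm_eq j)]
    apply Summable.sum_le_tsum (Finset.range m) _ hsummable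
    intro j _
    have hΓj : 0 < Real.Gamma (β * j + 1) := Real.Gamma_pos_of_pos (by positivity)
    positivity
  calc y τ ≤ _ := h1
    _ ≤ c * (∑' j : ℕ, (ν * τ ^ β) ^ j / Real.Gamma (β * j + 1))
        + M * ((ν * τ ^ β) ^ m / Real.Gamma (β * m + 1)) := by
        apply add_le_add (mul_le_mul_of_nonneg_left h2 hc)
        rw [hterm_eq m]
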